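/- Let $M$ be an $R$-module, $T$ a closed subset of $Spec(M)$ in the Zariski topology, $Q = (\cap_{P\in T}P : M)M$, and $\bar{M} = M/Q$. Then the graph $AG(\bar{M})^*$ is isomorphic to a subgraph of $G(\tau_T)$: every vertex $\bar{N}$ of $AG(\bar{M})^*$ gives a vertex $N$ of $G(\tau_T)$, and adjacency in $AG(\bar{M})^*$ implies adjacency in $G(\tau_T)$. -/

import Mathlib

open Submodule

section Defs
variable (R : Type*) [CommRing R] {M : Type*} [AddCommGroup M] [Module R M]

/-- `(N : M)`, the colon ideal of a submodule with the whole module. -/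
def colonTop (N : Submodule R M) : Ideal R := N.colon ⊤

variable {R}

/-- A prime submodule. -/
def IsPrimeSubmodule (P : Submodule R M) : Prop :=
  P ≠ ⊤ ∧ ∀ (r : R) (m : M), r • m ∈ P → r ∈ colonTop R P ∨ m ∈ P

/-- The prime spectrum of a module, as a set of submodules. -/
def specSet (R : Type*) [CommRing R] (M : Type*) [AddCommGroup M] [Module R M] :
    Set (Submodule R M) := {P | IsPrimeSubmodule P}

/-- `V(N)`. -/
def Vset (N : Submodule R M) : Set (Submodule R M) :=
  {P | IsPrimeSubmodule P ∧ colonTop R N ≤ colonTop R P}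

/-- `V^*(N)`. -/
def VstarSet (N : Submodule R M) : Set (Submodule R M) :=
  {P | IsPrimeSubmodule P ∧ N ≤ P}

/-- The product `NK = (N:M)(K:M)M` of two submodules. -/
def prodSub (N K : Submodule R M) : Submodule R M :=
  (colonTop R N * colonTop R K) • (⊤ : Submodule R M)

/-- The prime radical of a submodule. -/
def radicalSub (N : Submodule R M) : Submodule R M :=
  sInf {P | IsPrimeSubmodule P ∧ N ≤ P}

/-- Adjacency in the Zariski topology-graph `G(τ_T)`. -/
def ZAdj (T : Set (Submodule R M)) (N L : Submodule R M) : Prop :=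
  N ≠ L ∧ N ≠ ⊤ ∧ L ≠ ⊤ ∧ Vset N ∪ Vset L = T ∧ Vset N ≠ T ∧ Vset L ≠ T

/-- Vertices of the Zariski topology-graph `G(τ_T)`. -/
def ZVertex (T : Set (Submodule R M)) (N : Submodule R M) : Prop :=
  ∃ K, ZAdj T N K

/-- The Zariski topology-graph `G(τ_T)` as a simple graph on its vertex set. -/
def ZGraph (T : Set (Submodule R M)) : SimpleGraph {N : Submodule R M // ZVertex T N} where
  Adj a b := ZAdj T a.1 b.1
  symm := ⟨by
    rintro a b ⟨h1, h2, h3, h4, h5, h6⟩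
    exact ⟨h1.symm, h3, h2, by rwa [Set.union_comm], h6, h5⟩⟩
  loopless := ⟨by rintro a ⟨h1, -⟩; exact h1 rfl⟩

end Defs
section Extra
variable {R : Type*} [CommRing R] {M : Type*} [AddCommGroup M] [Module R M]

/-- Prime submodule of a submodule `W`, internal version (i.e. a prime submodule of the
module `W`). -/
def IsPrimeIn (W P : Submodule R M) : Prop :=
  P < W ∧ ∀ (r : R) (m : M), m ∈ W → r • m ∈ P → (∀ x ∈ W, r • x ∈ P) ∨ m ∈ P

/-- The prime radical of `N` computed inside the submodule `W`. -/
def radicalIn (W N : Submodule R M) : Submodule R M :=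
  sInf {P | IsPrimeIn W P ∧ N ≤ P} ⊓ W

/-- Vertices of the graph `AG(M)^*`. -/
def AGstarVertex (N : Submodule R M) : Prop :=
  N ≠ ⊤ ∧ colonTop R N ≠ Module.annihilator R M ∧
    ∃ K, K ≠ ⊤ ∧ colonTop R K ≠ Module.annihilator R M ∧ prodSub N K = ⊥

/-- Adjacency in the graph `AG(M)^*`. -/
def AGstarAdj (N L : Submodule R M) : Prop :=
  N ≠ L ∧ AGstarVertex N ∧ AGstarVertex L ∧ prodSub N L = ⊥

/-- The clique number of a graph, valued in `ℕ∞`. -/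
noncomputable def cliqueNumE {V : Type*} (G : SimpleGraph V) : ℕ∞ :=
  ⨆ n ∈ {n : ℕ | ∃ s, G.IsNClique n s}, (n : ℕ∞)

end Extra

section MyHelpers
variable {R : Type*} [CommRing R] {M : Type*} [AddCommGroup M] [Module R M]

lemma my_mem_colonTop {N : Submodule R M} {r : R} :
    r ∈ colonTop R N ↔ ∀ x : M, r • x ∈ N := by
  constructor
  · intro h x
    exact Submodule.mem_colon.mp h x trivial
  · intro h
    exact Submodule.mem_colon.mpr fun x _ => h x

lemma my_colonTop_mono {N N' : Submodule R M} (h : N ≤ N') :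
    colonTop R N ≤ colonTop R N' := fun r hr =>
  my_mem_colonTop.mpr fun x => h (my_mem_colonTop.mp hr x)

lemma my_smul_top_le_iff {I : Ideal R} {N : Submodule R M} :
    I • (⊤ : Submodule R M) ≤ N ↔ I ≤ colonTop R N := by
  constructor
  · intro h r hr
    exact my_mem_colonTop.mpr fun x => h (Submodule.smul_mem_smul hr trivial)
  · intro h
    exact Submodule.smul_le.mpr fun r hr x _ => my_mem_colonTop.mp (h hr) x

lemma my_mkQ_mem_map {Q N : Submodule R M} (hQN : Q ≤ N) (x : M) :
    Q.mkQ x ∈ Submodule.map Q.mkQ N ↔ x ∈ N := by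
  have : (Q.mkQ x ∈ Submodule.map Q.mkQ N) ↔
      x ∈ Submodule.comap Q.mkQ (Submodule.map Q.mkQ N) := Iff.rfl
  rw [this, Submodule.comap_map_mkQ, sup_eq_right.mpr hQN]

lemma my_colonTop_map_mkQ {Q N : Submodule R M} (hQN : Q ≤ N) :
    colonTop R (Submodule.map Q.mkQ N) = colonTop R N := by
  ext r
  rw [my_mem_colonTop, my_mem_colonTop]
  constructor
  · intro h x
    have := h (Q.mkQ x)
    rwa [← map_smul, my_mkQ_mem_map hQN] at this
  · intro h y
    obtain ⟨x, rfl⟩ := Q.mkQ_surjective y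
    rw [← map_smul, my_mkQ_mem_map hQN]
    exact h x

lemma my_ann_quotient (Q : Submodule R M) :
    Module.annihilator R (M ⧸ Q) = colonTop R Q := by
  ext r
  rw [Module.mem_annihilator, my_mem_colonTop]
  constructor
  · intro h x
    have := h (Q.mkQ x)
    rwa [← map_smul, Submodule.mkQ_apply, Submodule.Quotient.mk_eq_zero] at this
  · intro h y
    obtain ⟨x, rfl⟩ := Q.mkQ_surjective y
    rw [← map_smul, Submodule.mkQ_apply, Submodule.Quotient.mk_eq_zero]
    exact h x

lemma my_colonTop_isPrime {P : Submodule R M} (hP : IsPrimeSubmodule P) :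
    (colonTop R P).IsPrime := by
  constructor
  · intro h
    apply hP.1
    rw [eq_top_iff]
    intro x _
    have h1 : (1 : R) ∈ colonTop R P := h ▸ Submodule.mem_top
    simpa using my_mem_colonTop.mp h1 x
  · intro a b hab
    by_cases ha : a ∈ colonTop R P
    · exact Or.inl ha
    right
    rw [my_mem_colonTop]
    intro x
    have hax : a • (b • x) ∈ P := by
      have := my_mem_colonTop.mp hab x
      rwa [mul_smul] at this
    rcases hP.2 a (b • x) hax with h | h
    · exact absurd h ha
    · exact h

lemma my_le_colonTop_sInf {T : Set (Submodule R M)} {I : Ideal R}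
    (h : ∀ P ∈ T, I ≤ colonTop R P) : I ≤ colonTop R (sInf T) := by
  intro r hr
  rw [my_mem_colonTop]
  intro x
  rw [Submodule.mem_sInf]
  intro P hP
  exact my_mem_colonTop.mp (h P hP hr) x

lemma my_map_mkQ_top (Q : Submodule R M) :
    Submodule.map Q.mkQ (⊤ : Submodule R M) = ⊤ := by
  rw [Submodule.map_top, Submodule.range_mkQ]

lemma my_prodSub_map_eq_bot {Q N K : Submodule R M} (hQN : Q ≤ N) (hQK : Q ≤ K) :
    prodSub (Submodule.map Q.mkQ N) (Submodule.map Q.mkQ K) = ⊥ ↔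
      (colonTop R N * colonTop R K) • (⊤ : Submodule R M) ≤ Q := by
  rw [prodSub, my_colonTop_map_mkQ hQN, my_colonTop_map_mkQ hQK,
    show (⊤ : Submodule R (M ⧸ Q)) = Submodule.map Q.mkQ ⊤ from (my_map_mkQ_top Q).symm,
    ← Submodule.map_smul'', ← le_bot_iff, Submodule.map_le_iff_le_comap,
    Submodule.comap_bot, Submodule.ker_mkQ]

lemma my_core {T : Set (Submodule R M)} (hTs : T ⊆ specSet R M)
    (hclosed : T = Vset (sInf T)) {Q : Submodule R M}
    (hQ : Q = colonTop R (sInf T) • (⊤ : Submodule R M))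
    {N K : Submodule R M} (hQN : Q ≤ N) (hQK : Q ≤ K)
    (hN : N ≠ ⊤) (hK : K ≠ ⊤)
    (hNc : colonTop R N ≠ colonTop R Q) (hKc : colonTop R K ≠ colonTop R Q)
    (hprod : (colonTop R N * colonTop R K) • (⊤ : Submodule R M) ≤ Q) :
    ZAdj T N K := by
  have hIQ : colonTop R (sInf T) ≤ colonTop R Q :=
    my_smul_top_le_iff.mp (le_of_eq hQ.symm)
  have hQN' : colonTop R Q ≤ colonTop R N := my_colonTop_mono hQN
  have hQK' : colonTop R Q ≤ colonTop R K := my_colonTop_mono hQK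
  have memT : ∀ P ∈ T, IsPrimeSubmodule P ∧ colonTop R (sInf T) ≤ colonTop R P := by
    intro P hP
    have : P ∈ Vset (sInf T) := hclosed ▸ hP
    exact this
  have QleP : ∀ P ∈ T, Q ≤ P := by
    intro P hP
    rw [hQ]
    exact my_smul_top_le_iff.mpr (memT P hP).2
  have unionT : Vset N ∪ Vset K = T := by
    apply Set.eq_of_subset_of_subset
    · rintro P (⟨hPp, hle⟩ | ⟨hPp, hle⟩)
      · rw [hclosed]; exact ⟨hPp, hIQ.trans (hQN'.trans hle)⟩
      · rw [hclosed]; exact ⟨hPp, hIQ.trans (hQK'.trans hle)⟩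
    · intro P hP
      have hPp := (memT P hP).1
      have hmul : colonTop R N * colonTop R K ≤ colonTop R P :=
        my_smul_top_le_iff.mp (hprod.trans (QleP P hP))
      rcases (my_colonTop_isPrime hPp).mul_le.mp hmul with h | h
      · exact Or.inl ⟨hPp, h⟩
      · exact Or.inr ⟨hPp, h⟩
  have neN : Vset N ≠ T := by
    intro heq
    apply hNc
    refine le_antisymm ?_ hQN'
    have h1 : colonTop R N ≤ colonTop R (sInf T) := by
      apply my_le_colonTop_sInf
      intro P hP
      have : P ∈ Vset N := heq ▸ hP
      exact this.2
    have h2 : colonTop R N • (⊤ : Submodule R M) ≤ Q := by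
      rw [hQ]
      exact Submodule.smul_mono_left h1
    exact my_smul_top_le_iff.mp h2
  have neK : Vset K ≠ T := by
    intro heq
    apply hKc
    refine le_antisymm ?_ hQK'
    have h1 : colonTop R K ≤ colonTop R (sInf T) := by
      apply my_le_colonTop_sInf
      intro P hP
      have : P ∈ Vset K := heq ▸ hP
      exact this.2
    have h2 : colonTop R K • (⊤ : Submodule R M) ≤ Q := by
      rw [hQ]
      exact Submodule.smul_mono_left h1
    exact my_smul_top_le_iff.mp h2
  have NneK : N ≠ K := by
    intro h
    apply neN
    rw [← unionT, h, Set.union_self]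
  exact ⟨NneK, hN, hK, unionT, neN, neK⟩

end MyHelpers
/-- for `T` closed, `AG(M/Q)^*` is isomorphic to a subgraph of `G(τ_T)`:
vertices of `AG(M/Q)^*` (images of submodules `N ⊇ Q`) give vertices `N` of `G(τ_T)`,
and adjacency in `AG(M/Q)^*` implies adjacency in `G(τ_T)`. -/
theorem stmt16 {R : Type*} [CommRing R] {M : Type*} [AddCommGroup M] [Module R M]
    (T : Set (Submodule R M)) (hT : T.Nonempty) (hTs : T ⊆ specSet R M)
    (hclosed : T = Vset (sInf T))
    (Q : Submodule R M) (hQ : Q = colonTop R (sInf T) • (⊤ : Submodule R M)) :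
    (∀ N : Submodule R M, Q ≤ N → AGstarVertex (Submodule.map Q.mkQ N) → ZVertex T N) ∧
      (∀ N L : Submodule R M, Q ≤ N → Q ≤ L →
        AGstarAdj (Submodule.map Q.mkQ N) (Submodule.map Q.mkQ L) → ZAdj T N L) := by
  constructor
  · rintro N hQN ⟨hNtop, hNc, K', hK'top, hK'c, hprod⟩
    set K : Submodule R M := Submodule.comap Q.mkQ K' with hKdef
    have hQK : Q ≤ K := by
      intro x hx
      have : Q.mkQ x = 0 := (Submodule.Quotient.mk_eq_zero Q).mpr hx
      show Q.mkQ x ∈ K'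
      rw [this]; exact K'.zero_mem
    have hmapK : Submodule.map Q.mkQ K = K' :=
      Submodule.map_comap_eq_of_surjective Q.mkQ_surjective K'
    have hN : N ≠ ⊤ := by
      rintro rfl
      exact hNtop (my_map_mkQ_top Q)
    have hK : K ≠ ⊤ := by
      rintro h
      apply hK'top
      rw [← hmapK, h, my_map_mkQ_top Q]
    refine ⟨K, my_core hTs hclosed hQ hQN hQK hN hK ?_ ?_ ?_⟩
    · rwa [my_colonTop_map_mkQ hQN, my_ann_quotient] at hNc
    · rw [← hmapK] at hK'c
      rwa [my_colonTop_map_mkQ hQK, my_ann_quotient] at hK'c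
    · rw [← hmapK] at hprod
      exact (my_prodSub_map_eq_bot hQN hQK).mp hprod
  · rintro N L hQN hQL ⟨-, ⟨hNtop, hNc, -⟩, ⟨hLtop, hLc, -⟩, hprod⟩
    have hN : N ≠ ⊤ := by rintro rfl; exact hNtop (my_map_mkQ_top Q)
    have hL : L ≠ ⊤ := by rintro rfl; exact hLtop (my_map_mkQ_top Q)
    refine my_core hTs hclosed hQ hQN hQL hN hL ?_ ?_ ?_
    · rwa [my_colonTop_map_mkQ hQN, my_ann_quotient] at hNc
    · rwa [my_colonTop_map_mkQ hQL, my_ann_quotient] at hLc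
    · exact (my_prodSub_map_eq_bot hQN hQL).mp hprod
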